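/- Let R be a commutative ring, W a finite set, inv : W → W a map, Λ a finite index set, and for each λ ∈ Λ let d(λ) ≥ 1, let ρ^λ : W → M_{d(λ)}(R) be a family of matrices, let f(λ) ∈ R be invertible, and let B^λ be an invertible d(λ)×d(λ) matrix over R. Let ε : W → R satisfy ε(w)² = 1 for all w, and assume the second Schur relations: for all x,y ∈ W, Σ_{λ∈Λ} Σ_{s,t=1}^{d(λ)} f(λ)⁻¹·ρ^λ(x)_{s,t}·ρ^λ(inv(y))_{t,s} equals 1 if x = y and 0 otherwise. In the free R-module with basis {e_w : w ∈ W}, define C^λ_{s,t} := Σ_{w∈W} ε(w)·(B^λ·ρ^λ(inv(w)))_{t,s}·e_w. Then the elements {C^λ_{s,t} : λ ∈ Λ, 1 ≤ s,t ≤ d(λ)} span the free R-module; if moreover Σ_{λ∈Λ} d(λ)² equals the cardinality of W, they form an R-basis. -/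

import Mathlib

open Matrix

/-- Step 1 ((C1) of Graham–Lehrer's cell datum axioms) in the proof of Theorem 3.1 of
Geck, "Hecke algebras of finite type are cellular": the candidate cellular basis
elements `C^λ_{s,t} = Σ_w ε(w)·(B^λ·ρ^λ(inv w))_{t,s}·e_w` span the free module with
basis `{e_w : w ∈ W}`, provided the second Schur relations hold, the Schur elements
`f λ` are invertible and the matrices `B^λ` are invertible; if moreover
`|W| = Σ_λ d(λ)²`, they form a basis. -/
theorem stmt_9 (R : Type) [CommRing R] (W : Type) [Fintype W] [DecidableEq W] (inv : W → W)
    (Λ : Type) [Fintype Λ] (d : Λ → ℕ) (hd : ∀ l : Λ, 1 ≤ d l)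
    (ρ : (l : Λ) → W → Matrix (Fin (d l)) (Fin (d l)) R)
    (f : Λ → Rˣ)
    (B : (l : Λ) → Matrix (Fin (d l)) (Fin (d l)) R)
    (hB : ∀ l : Λ, IsUnit (B l))
    (ε : W → R) (hε : ∀ w : W, ε w ^ 2 = 1)
    (hschur2 : ∀ x y : W,
      ∑ l : Λ, ∑ s : Fin (d l), ∑ t : Fin (d l),
        (((f l)⁻¹ : Rˣ) : R) * ρ l x s t * ρ l (inv y) t s = if x = y then 1 else 0) :
    Submodule.span R (Set.range
        (fun i : Σ l : Λ, Fin (d l) × Fin (d l) =>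
          ∑ w : W, Finsupp.single w (ε w * (B i.1 * ρ i.1 (inv w)) i.2.2 i.2.1)))
      = (⊤ : Submodule R (W →₀ R)) ∧
    (Fintype.card W = ∑ l : Λ, (d l) ^ 2 →
      ∃ b : Module.Basis (Σ l : Λ, Fin (d l) × Fin (d l)) R (W →₀ R),
        ∀ i : Σ l : Λ, Fin (d l) × Fin (d l),
          b i = ∑ w : W, Finsupp.single w (ε w * (B i.1 * ρ i.1 (inv w)) i.2.2 i.2.1)) := by
  set v : (Σ l : Λ, Fin (d l) × Fin (d l)) → (W →₀ R) :=
    fun i => ∑ w : W, Finsupp.single w (ε w * (B i.1 * ρ i.1 (inv w)) i.2.2 i.2.1) with hv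
  -- key identity: each basis vector is a combination of the v i
  have key : ∀ y : W,
      (∑ i : Σ l : Λ, Fin (d l) × Fin (d l),
        (ε y * (((f i.1)⁻¹ : Rˣ) : R) * (ρ i.1 y * (B i.1)⁻¹) i.2.1 i.2.2) • v i)
      = Finsupp.single y 1 := by
    intro y
    ext w
    have hBinv : ∀ l : Λ, (B l)⁻¹ * B l = 1 := fun l =>
      Matrix.nonsing_inv_mul _ ((Matrix.isUnit_iff_isUnit_det _).mp (hB l))
    have hmain : ∑ l : Λ, ∑ s : Fin (d l), ∑ t : Fin (d l),
        (ε y * (((f l)⁻¹ : Rˣ) : R) * (ρ l y * (B l)⁻¹) s t) *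
          (ε w * (B l * ρ l (inv w)) t s) = if y = w then 1 else 0 := by
      have h1 : ∀ l : Λ, ∑ s : Fin (d l), ∑ t : Fin (d l),
          (ρ l y * (B l)⁻¹) s t * (B l * ρ l (inv w)) t s
          = ∑ s : Fin (d l), ∑ t : Fin (d l), ρ l y s t * ρ l (inv w) t s := by
        intro l
        have : ∀ s : Fin (d l), ∑ t : Fin (d l),
            (ρ l y * (B l)⁻¹) s t * (B l * ρ l (inv w)) t s
            = ((ρ l y * (B l)⁻¹) * (B l * ρ l (inv w))) s s := by
          intro s; simp [Matrix.mul_apply]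
        simp only [this]
        have hmat : (ρ l y * (B l)⁻¹) * (B l * ρ l (inv w)) = ρ l y * ρ l (inv w) := by
          rw [Matrix.mul_assoc, ← Matrix.mul_assoc (B l)⁻¹, hBinv l, Matrix.one_mul]
        rw [hmat]
        simp [Matrix.mul_apply]
      have h2 : ∑ l : Λ, ∑ s : Fin (d l), ∑ t : Fin (d l),
          (ε y * (((f l)⁻¹ : Rˣ) : R) * (ρ l y * (B l)⁻¹) s t) *
            (ε w * (B l * ρ l (inv w)) t s)
          = (ε y * ε w) * ∑ l : Λ, ∑ s : Fin (d l), ∑ t : Fin (d l),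
              (((f l)⁻¹ : Rˣ) : R) * ((ρ l y * (B l)⁻¹) s t * (B l * ρ l (inv w)) t s) := by
        simp only [Finset.mul_sum]; congr 1; funext l; congr 1; funext s; congr 1; funext t
        ring
      rw [h2]
      have h3 : ∑ l : Λ, ∑ s : Fin (d l), ∑ t : Fin (d l),
          (((f l)⁻¹ : Rˣ) : R) * ((ρ l y * (B l)⁻¹) s t * (B l * ρ l (inv w)) t s)
          = ∑ l : Λ, ∑ s : Fin (d l), ∑ t : Fin (d l),
              (((f l)⁻¹ : Rˣ) : R) * ρ l y s t * ρ l (inv w) t s := by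
        refine Finset.sum_congr rfl fun l _ => ?_
        simp only [mul_assoc, ← Finset.mul_sum]
        rw [h1 l]
      rw [h3, hschur2 y w]
      by_cases h : y = w
      · subst h; simp [← pow_two, hε]
      · simp [h]
    calc (∑ i : Σ l : Λ, Fin (d l) × Fin (d l),
        (ε y * (((f i.1)⁻¹ : Rˣ) : R) * (ρ i.1 y * (B i.1)⁻¹) i.2.1 i.2.2) • v i) w
        = ∑ l : Λ, ∑ s : Fin (d l), ∑ t : Fin (d l),
            (ε y * (((f l)⁻¹ : Rˣ) : R) * (ρ l y * (B l)⁻¹) s t) *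
              (ε w * (B l * ρ l (inv w)) t s) := by
          rw [Finsupp.finset_sum_apply, ← Finset.univ_sigma_univ, Finset.sum_sigma]
          refine Finset.sum_congr rfl fun l _ => ?_
          rw [Fintype.sum_prod_type]
          refine Finset.sum_congr rfl fun s _ => Finset.sum_congr rfl fun t _ => ?_
          rw [hv]
          simp only [Finsupp.smul_apply, Finsupp.finset_sum_apply, Finsupp.single_apply]
          rw [Finset.sum_eq_single w (by intro b _ hb; simp [hb]) (by simp)]
          simp [smul_eq_mul]
      _ = if y = w then 1 else 0 := hmain
      _ = (Finsupp.single y (1 : R)) w := by rw [Finsupp.single_apply]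
  have hspan : Submodule.span R (Set.range v) = ⊤ := by
    rw [eq_top_iff]
    intro x hx
    clear hx
    induction x using Finsupp.induction_linear with
    | zero => exact Submodule.zero_mem _
    | add a b ha hb => exact Submodule.add_mem _ ha hb
    | single y r =>
      have : Finsupp.single y r = r • Finsupp.single y (1 : R) := by
        simp [Finsupp.smul_single]
      rw [this, ← key y]
      exact Submodule.smul_mem _ _ (Submodule.sum_mem _ fun i _ =>
        Submodule.smul_mem _ _ (Submodule.subset_span ⟨i, rfl⟩))
  refine ⟨hspan, fun hcard => ?_⟩
  -- build basis
  have hcard' : Fintype.card (Σ l : Λ, Fin (d l) × Fin (d l)) = Fintype.card W := by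
    simp [Fintype.card_sigma, hcard, pow_two]
  have hsurj : Function.Surjective (Finsupp.linearCombination R v) := by
    rw [← LinearMap.range_eq_top, Finsupp.range_linearCombination, hspan]
  have e : (Σ l : Λ, Fin (d l) × Fin (d l)) ≃ W := Fintype.equivOfCardEq hcard'
  have hinj : Function.Injective (Finsupp.linearCombination R v) := by
    set g : (W →₀ R) ≃ₗ[R] ((Σ l : Λ, Fin (d l) × Fin (d l)) →₀ R) :=
      Finsupp.domLCongr e.symm with hg
    have hend : Function.Surjective
        ((Finsupp.linearCombination R v).comp g.toLinearMap :
          (W →₀ R) →ₗ[R] (W →₀ R)) := by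
      rw [LinearMap.coe_comp]
      exact hsurj.comp g.surjective
    have h1 := OrzechProperty.injective_of_surjective_endomorphism _ hend
    rw [LinearMap.coe_comp] at h1
    have h3 : Function.Injective ((⇑(Finsupp.linearCombination R v) ∘ ⇑g.toLinearMap) ∘ ⇑g.symm) :=
      h1.comp g.symm.injective
    have heq : ⇑(Finsupp.linearCombination R v)
        = (⇑(Finsupp.linearCombination R v) ∘ ⇑g.toLinearMap) ∘ ⇑g.symm := by
      funext x; simp
    rw [heq]; exact h3
  have hli : LinearIndependent R v := hinj
  exact ⟨Module.Basis.mk hli (le_of_eq hspan.symm), fun i => by rw [Module.Basis.mk_apply]⟩
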